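/- If every L_i is invariant under the commutant Z' of Z, then the characters χ_i are pairwise distinct: for all i ≠ j in I there exists z ∈ Z with χ_i(z) ≠ χ_j(z). (Key mechanism in the proof of Theorem 3.1 on the uniqueness of central characters: modules attached to a multiplicity-free decomposition under the commutant of the center are separated by their central characters.) -/

import Mathlib

open scoped DirectSum


/-- **Separation of central characters (key mechanism in the proof of
Theorem 3.1).**
Let `L = ⊕_{i ∈ I} L_i` be an internal direct sum of nonzero subspaces of a
complex vector space, and let `Z` be a set of endomorphisms each of which acts
on each `L_i` by the scalar `χ i z`.  If every `L_i` is invariant under the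
commutant `Z'` of `Z`, then the characters `χ i` are pairwise distinct: for
`i ≠ j` there is `z ∈ Z` with `χ i z ≠ χ j z`. -/
theorem central_characters_pairwise_distinct
    {M : Type*} [AddCommGroup M] [Module ℂ M]
    {I : Type*} [DecidableEq I]
    (L : I → Submodule ℂ M)
    -- each `L i` is nonzero
    (hne : ∀ i, L i ≠ ⊥)
    -- `M` is the internal direct sum of the `L i`
    (hint : DirectSum.IsInternal L)
    (Z : Set (Module.End ℂ M)) (χ : I → Module.End ℂ M → ℂ)
    -- each `z ∈ Z` acts on `L i` by the scalar `χ i z`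
    (hscal : ∀ z ∈ Z, ∀ i, ∀ x ∈ L i, z x = χ i z • x)
    -- each `L i` is invariant under the commutant of `Z`
    (hcomm : ∀ T : Module.End ℂ M, (∀ z ∈ Z, T * z = z * T) →
      ∀ i, ∀ x ∈ L i, T x ∈ L i) :
    ∀ i j, i ≠ j → ∃ z ∈ Z, χ i z ≠ χ j z := by
  intro i j hij
  by_contra hcon
  push_neg at hcon
  obtain ⟨x0, hx0i, hx0⟩ : ∃ x ∈ L i, x ≠ 0 := by
    simpa [Submodule.ne_bot_iff] using hne i
  obtain ⟨y0, hy0j, hy0⟩ : ∃ y ∈ L j, y ≠ 0 := by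
    simpa [Submodule.ne_bot_iff] using hne j
  -- the projection onto `L i` along the direct sum decomposition
  set e : (⨁ k, L k) ≃ₗ[ℂ] M :=
    LinearEquiv.ofBijective (DirectSum.coeLinearMap L) hint with he
  set π : M →ₗ[ℂ] L i :=
    (DirectSum.component ℂ I (fun k => L k) i) ∘ₗ (e.symm : M →ₗ[ℂ] (⨁ k, L k))
    with hπ
  have hπ_same : ∀ x (hx : x ∈ L i), π x = ⟨x, hx⟩ := by
    intro x hx
    exact
      hint.ofBijective_coeLinearMap_of_mem hx
  have hπ_ne : ∀ k, k ≠ i → ∀ x ∈ L k, π x = 0 := by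
    intro k hk x hx
    exact
      hint.ofBijective_coeLinearMap_of_mem_ne hk hx
  -- the projection intertwines `z` with the scalar `χ i z`
  have hπz : ∀ z ∈ Z, ∀ x : M, π (z x) = χ i z • π x := by
    intro z hz x
    have hx : x ∈ (⊤ : Submodule ℂ M) := trivial
    rw [← hint.submodule_iSup_eq_top] at hx
    induction hx using Submodule.iSup_induction' with
    | mem k y hy =>
        rw [hscal z hz k y hy]
        by_cases hk : k = i
        · subst hk
          simp [hπ_same y hy, map_smul]
        · simp [hπ_ne k hk y hy, map_smul]
    | zero => simp
    | add y₁ hy₁ y₂ hy₂ ih₁ ih₂ =>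
        simp [map_add, ih₁, ih₂, smul_add]
  -- a linear functional on `L i` not vanishing at `x0`
  obtain ⟨φ, hφ⟩ : ∃ φ : Module.Dual ℂ (L i), φ ⟨x0, hx0i⟩ ≠ 0 := by
    by_contra h
    push_neg at h
    have := (Module.forall_dual_apply_eq_zero_iff ℂ (⟨x0, hx0i⟩ : L i)).mp h
    exact hx0 (by simpa [Subtype.ext_iff] using this)
  -- the rank-one operator `x ↦ φ (π x) • y0`
  set T : Module.End ℂ M := (φ ∘ₗ π).smulRight y0 with hT
  have hTcomm : ∀ z ∈ Z, T * z = z * T := by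
    intro z hz
    ext x
    have h1 : T (z x) = (χ i z * φ (π x)) • y0 := by
      simp [hT, hπz z hz x, map_smul, smul_eq_mul]
    have h2 : z (T x) = (χ j z * φ (π x)) • y0 := by
      simp [hT, map_smul, hscal z hz j y0 hy0j, smul_smul, mul_comm]
    simp only [Module.End.mul_apply]
    rw [h1, h2, hcon z hz]
  have hmem : T x0 ∈ L i := hcomm T hTcomm i x0 hx0i
  have hTx0 : T x0 = φ ⟨x0, hx0i⟩ • y0 := by
    simp [hT, hπ_same x0 hx0i]
  have hmemj : T x0 ∈ L j := by
    rw [hTx0]; exact (L j).smul_mem _ hy0j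
  have hdisj : Disjoint (L i) (L j) :=
    hint.submodule_iSupIndep.pairwiseDisjoint hij
  have : T x0 = 0 := by
    have := hdisj.le_bot ⟨hmem, hmemj⟩
    simpa using this
  rw [hTx0] at this
  rcases smul_eq_zero.mp this with h | h
  · exact hφ h
  · exact hy0 h
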